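/- (AEP for the free projective robustness.) Let (F_n) be a free-state family satisfying Axioms I–IV such that R_{s,F_n}(τ) < ∞ for every state τ. Define D_{Ω,s,F}(ω) := min_{σ∈F}[ D_s(ω‖σ) + D_max(σ‖ω) ], where D_s(ω‖σ) := inf{ log₂ λ : λ > 0, λσ − ω ∈ cone(F) }. Then the smoothed regularizations coincide: lim_{ε→0} limsup_{n→∞} min{ (1/n) D_{Ω,s,F_n}(ω') : (1/2)‖ω' − ω^{⊗n}‖₁ ≤ ε } = lim_{ε→0} limsup_{n→∞} min{ (1/n) log₂(1 + R_{s,F_n}(ω')) : (1/2)‖ω' − ω^{⊗n}‖₁ ≤ ε }. -/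

import Mathlib

open scoped BigOperators ComplexOrder
open Filter Topology

noncomputable section

namespace QRT

open scoped Classical

variable {ι κ : Type*} [Fintype ι] [DecidableEq ι] [Fintype κ] [DecidableEq κ]

/-- A density matrix (quantum state): positive semidefinite with unit trace. -/
def IsState (ρ : Matrix ι ι ℂ) : Prop :=
  ρ.PosSemidef ∧ ρ.trace = 1

/-- Loewner order: `A ≤ B` iff `B - A` is positive semidefinite. -/
def Loewner (A B : Matrix ι ι ℂ) : Prop :=
  (B - A).PosSemidef

/-- Trace norm (sum of singular values): `‖A‖₁ = Tr √(AᴴA)`. -/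
def traceNorm (A : Matrix ι ι ℂ) : ℝ :=
  (((Matrix.isHermitian_conjTranspose_mul_self A).eigenvectorUnitary.1 *
    Matrix.diagonal (fun i => ((√((Matrix.isHermitian_conjTranspose_mul_self A).eigenvalues i) : ℝ) : ℂ)) *
    (star (Matrix.isHermitian_conjTranspose_mul_self A).eigenvectorUnitary : Matrix ι ι ℂ)).trace).re

/-- The max-relative entropy `D_max(ρ‖σ)` (base 2); `+∞` if infeasible. -/
def Dmax (ρ σ : Matrix ι ι ℂ) : EReal :=
  sInf {x : EReal | ∃ l : ℝ, 0 < l ∧ Loewner ρ (l • σ) ∧ x = ((Real.logb 2 l : ℝ) : EReal)}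

/-- The projective relative entropy (Hilbert projective metric). -/
def DOmega (ρ σ : Matrix ι ι ℂ) : EReal :=
  Dmax ρ σ + Dmax σ ρ

/-- Support inclusion `supp ρ ⊆ supp σ` for positive semidefinite matrices,
expressed as kernel inclusion `ker σ ⊆ ker ρ`. -/
def SuppLe (ρ σ : Matrix ι ι ℂ) : Prop :=
  ∀ v : ι → ℂ, σ.mulVec v = 0 → ρ.mulVec v = 0

/-- Application of a real function to a Hermitian matrix via the spectral decomposition. -/
def mfun (f : ℝ → ℝ) (A : Matrix ι ι ℂ) : Matrix ι ι ℂ :=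
  if hA : A.IsHermitian then
    (hA.eigenvectorUnitary : Matrix ι ι ℂ) *
      Matrix.diagonal (fun i => (f (hA.eigenvalues i) : ℂ)) *
      (hA.eigenvectorUnitary : Matrix ι ι ℂ).conjTranspose
  else 0

/-- Base-2 matrix logarithm on the support of a positive semidefinite matrix. -/
def mlog2 (A : Matrix ι ι ℂ) : Matrix ι ι ℂ :=
  mfun (fun x => if x ≤ 0 then 0 else Real.logb 2 x) A

/-- Umegaki quantum relative entropy (base 2):
`D(ρ‖σ) = Tr[ρ (log₂ ρ - log₂ σ)]` if `supp ρ ⊆ supp σ`, and `+∞` otherwise. -/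
def Drel (ρ σ : Matrix ι ι ℂ) : EReal :=
  if SuppLe ρ σ then (((ρ * (mlog2 ρ - mlog2 σ)).trace.re : ℝ) : EReal) else ⊤

/-- Relative entropy of a resource: `D_F(ρ) = min_{σ ∈ F} D(ρ‖σ)`. -/
def DF (F : Set (Matrix ι ι ℂ)) (ρ : Matrix ι ι ℂ) : EReal :=
  sInf {x : EReal | ∃ σ ∈ F, x = Drel ρ σ}

/-- Max-relative entropy of a resource. -/
def DmaxF (F : Set (Matrix ι ι ℂ)) (ρ : Matrix ι ι ℂ) : EReal :=
  sInf {x : EReal | ∃ σ ∈ F, x = Dmax ρ σ}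

/-- Projective relative entropy of a resource: `D_{Ω,F}(ρ) = min_{σ ∈ F} D_Ω(ρ‖σ)`. -/
def DOmegaF (F : Set (Matrix ι ι ℂ)) (ρ : Matrix ι ι ℂ) : EReal :=
  sInf {x : EReal | ∃ σ ∈ F, x = DOmega ρ σ}

/-- Min-relative entropy of a resource for a pure state `ψ`:
`D_{min,F}(ψ) = min_{σ∈F} (-log₂⟨ψ|σ|ψ⟩)` where `⟨ψ|σ|ψ⟩ = Tr(ψσ)`. -/
def DminF (F : Set (Matrix ι ι ℂ)) (ψ : Matrix ι ι ℂ) : EReal :=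
  sInf {x : EReal | ∃ σ ∈ F, 0 < ((ψ * σ).trace).re ∧
    x = ((-(Real.logb 2 (((ψ * σ).trace).re)) : ℝ) : EReal)}

/-- The convex cone generated by a set of states. -/
def cone (F : Set (Matrix ι ι ℂ)) : Set (Matrix ι ι ℂ) :=
  {A | ∃ t : ℝ, 0 ≤ t ∧ ∃ σ ∈ F, A = t • σ}

/-- `D_s(ω‖σ) := inf { log₂ λ : λ > 0, λσ - ω ∈ cone(F) }`. -/
def Ds (F : Set (Matrix ι ι ℂ)) (ω σ : Matrix ι ι ℂ) : EReal :=
  sInf {x : EReal | ∃ l : ℝ, 0 < l ∧ (l • σ - ω) ∈ cone F ∧ x = ((Real.logb 2 l : ℝ) : EReal)}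

/-- The free variant of the projective relative entropy:
`D_{Ω,s,F}(ω) := min_{σ∈F} [ D_s(ω‖σ) + D_max(σ‖ω) ]`. -/
def DOmegasF (F : Set (Matrix ι ι ℂ)) (ω : Matrix ι ι ℂ) : EReal :=
  sInf {x : EReal | ∃ σ ∈ F, x = Ds F ω σ + Dmax σ ω}

/-- The standard robustness `R_{s,F}(ρ) := inf{ λ ≥ 0 : ∃ σ ∈ F, (ρ+λσ)/(1+λ) ∈ F }`,
as an extended real (`+∞` if infeasible). -/
def Rs (F : Set (Matrix ι ι ℂ)) (ρ : Matrix ι ι ℂ) : EReal :=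
  sInf {x : EReal | ∃ l : ℝ, 0 ≤ l ∧ (∃ σ ∈ F, ((1 + l)⁻¹ • (ρ + l • σ)) ∈ F) ∧
    x = ((l : ℝ) : EReal)}

/-- `log₂(1 + R_{s,F}(ρ))`, the logarithmic standard robustness. -/
def logRs (F : Set (Matrix ι ι ℂ)) (ρ : Matrix ι ι ℂ) : EReal :=
  sInf {x : EReal | ∃ l : ℝ, 0 ≤ l ∧ (∃ σ ∈ F, ((1 + l)⁻¹ • (ρ + l • σ)) ∈ F) ∧
    x = ((Real.logb 2 (1 + l) : ℝ) : EReal)}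

/-- The Choi matrix of a linear map on matrices. -/
def choi (Λ : Matrix ι ι ℂ →ₗ[ℂ] Matrix κ κ ℂ) : Matrix (ι × κ) (ι × κ) ℂ :=
  Matrix.of fun p q => Λ (Matrix.single p.1 q.1 1) p.2 q.2

/-- Complete positivity, via Choi's theorem. -/
def IsCP (Λ : Matrix ι ι ℂ →ₗ[ℂ] Matrix κ κ ℂ) : Prop :=
  (choi Λ).PosSemidef

/-- Trace non-increasing on positive semidefinite inputs. -/
def TraceNonincreasing (Λ : Matrix ι ι ℂ →ₗ[ℂ] Matrix κ κ ℂ) : Prop :=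
  ∀ A : Matrix ι ι ℂ, A.PosSemidef → ((Λ A).trace).re ≤ (A.trace).re

/-- Normalization `A ↦ A / Tr A`. -/
def normalize (A : Matrix ι ι ℂ) : Matrix ι ι ℂ :=
  (A.trace)⁻¹ • A

/-- A free probabilistic operation: a completely positive trace–non-increasing map
that sends free states of `F` to free states of `F'` after renormalization. -/
def IsFreeOp (F : Set (Matrix ι ι ℂ)) (F' : Set (Matrix κ κ ℂ))
    (Λ : Matrix ι ι ℂ →ₗ[ℂ] Matrix κ κ ℂ) : Prop :=
  IsCP Λ ∧ TraceNonincreasing Λ ∧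
    ∀ σ ∈ F, 0 < ((Λ σ).trace).re → normalize (Λ σ) ∈ F'

/-- `n`-fold tensor (Kronecker) power of a matrix, indexed by `Fin n → ι`. -/
def tpow (ρ : Matrix ι ι ℂ) (n : ℕ) : Matrix (Fin n → ι) (Fin n → ι) ℂ :=
  Matrix.of fun i j => ∏ k, ρ (i k) (j k)

/-- Tensor product of tensor-power-indexed matrices. -/
def tmul {n m : ℕ} (A : Matrix (Fin n → ι) (Fin n → ι) ℂ)
    (B : Matrix (Fin m → ι) (Fin m → ι) ℂ) :
    Matrix (Fin (n + m) → ι) (Fin (n + m) → ι) ℂ :=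
  Matrix.of fun i j =>
    A (fun k => i (Fin.castAdd m k)) (fun k => j (Fin.castAdd m k)) *
      B (fun k => i (Fin.natAdd n k)) (fun k => j (Fin.natAdd n k))

/-- Partial trace over the tensor factor in position `k`. -/
def ptrace {n : ℕ} (σ : Matrix (Fin (n + 1) → ι) (Fin (n + 1) → ι) ℂ) (k : Fin (n + 1)) :
    Matrix (Fin n → ι) (Fin n → ι) ℂ :=
  Matrix.of fun i j => ∑ x : ι, σ (k.insertNth x i) (k.insertNth x j)

/-- Axioms I–IV for a family of free-state sets on tensor powers of `ℂ^d`: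
convex closed sets of states, containing the powers of a full-rank free state,
closed under partial traces and under tensor products. -/
structure IsFreeFamily (d : ℕ)
    (F : ∀ n : ℕ, Set (Matrix (Fin n → Fin d) (Fin n → Fin d) ℂ)) : Prop where
  states : ∀ n, ∀ σ ∈ F n, IsState σ
  convex : ∀ n, Convex ℝ (F n)
  closed : ∀ n, IsClosed (F n)
  fullRank : ∃ σ : Matrix (Fin d) (Fin d) ℂ, IsState σ ∧ σ.PosDef ∧ ∀ n, tpow σ n ∈ F n
  ptrace_mem : ∀ n, ∀ σ ∈ F (n + 1), ∀ k : Fin (n + 1), ptrace σ k ∈ F n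
  tmul_mem : ∀ n m, ∀ σ ∈ F n, ∀ σ' ∈ F m, tmul σ σ' ∈ F (n + m)

variable {I K : ℕ → Type*} [∀ n, Fintype (I n)] [∀ n, DecidableEq (I n)]
  [∀ n, Fintype (K n)] [∀ n, DecidableEq (K n)]

/-- The smallest trace-distance error achievable when transforming `ρseq n` into
`ωseq ⌊rn⌋` by free probabilistic operations. -/
def convErr (F : ∀ n, Set (Matrix (I n) (I n) ℂ)) (F' : ∀ n, Set (Matrix (K n) (K n) ℂ))
    (ρseq : ∀ n, Matrix (I n) (I n) ℂ) (ωseq : ∀ n, Matrix (K n) (K n) ℂ)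
    (r : ℝ) (n : ℕ) : ℝ :=
  sInf {e : ℝ |
    ∃ Λ : Matrix (I n) (I n) ℂ →ₗ[ℂ] Matrix (K ⌊r * n⌋₊) (K ⌊r * n⌋₊) ℂ,
      IsFreeOp (F n) (F' ⌊r * n⌋₊) Λ ∧
      e = (1 / 2) * traceNorm (normalize (Λ (ρseq n)) - ωseq ⌊r * n⌋₊)}

/-- The probabilistic transformation rate `r_prob`, as an extended real. -/
def rprob (F : ∀ n, Set (Matrix (I n) (I n) ℂ)) (F' : ∀ n, Set (Matrix (K n) (K n) ℂ))
    (ρseq : ∀ n, Matrix (I n) (I n) ℂ) (ωseq : ∀ n, Matrix (K n) (K n) ℂ) : EReal :=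
  sSup {x : EReal | ∃ r : ℝ, 0 ≤ r ∧ x = (r : EReal) ∧
    Tendsto (fun n => convErr F F' ρseq ωseq r n) atTop (nhds 0)}

/-- The strong converse probabilistic transformation rate `r†_prob`. -/
def rprobSC (F : ∀ n, Set (Matrix (I n) (I n) ℂ)) (F' : ∀ n, Set (Matrix (K n) (K n) ℂ))
    (ρseq : ∀ n, Matrix (I n) (I n) ℂ) (ωseq : ∀ n, Matrix (K n) (K n) ℂ) : EReal :=
  sSup {x : EReal | ∃ r : ℝ, 0 ≤ r ∧ x = (r : EReal) ∧
    liminf (fun n => convErr F F' ρseq ωseq r n) atTop < 1}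

/-- A pure state `ψ = |v⟩⟨v|` with `‖v‖ = 1`. -/
def IsPure (ψ : Matrix ι ι ℂ) : Prop :=
  IsState ψ ∧ ∃ v : ι → ℂ, ψ = Matrix.of fun i j => v i * (starRingEnd ℂ) (v j)

/-- Tensor product across the A/B bipartition of `n`-copy bipartite operators. -/
def abProd {dA dB n : ℕ} (A : Matrix (Fin n → Fin dA) (Fin n → Fin dA) ℂ)
    (B : Matrix (Fin n → Fin dB) (Fin n → Fin dB) ℂ) :
    Matrix (Fin n → Fin dA × Fin dB) (Fin n → Fin dA × Fin dB) ℂ :=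
  Matrix.of fun i j =>
    A (fun k => (i k).1) (fun k => (j k).1) * B (fun k => (i k).2) (fun k => (j k).2)

/-- Separable states on `n` copies of a bipartite system `ℂ^{dA} ⊗ ℂ^{dB}`, with respect to
the bipartition grouping all `A` factors against all `B` factors. -/
def SEP (dA dB n : ℕ) :
    Set (Matrix (Fin n → Fin dA × Fin dB) (Fin n → Fin dA × Fin dB) ℂ) :=
  closure (convexHull ℝ {ρ | ∃ A B, IsState A ∧ IsState B ∧ ρ = abProd A B})

/-- Separable states on a single copy of `ℂ^{dA} ⊗ ℂ^{dB}`. -/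
def SEP1 (dA dB : ℕ) : Set (Matrix (Fin dA × Fin dB) (Fin dA × Fin dB) ℂ) :=
  closure (convexHull ℝ
    {ρ | ∃ (A : Matrix (Fin dA) (Fin dA) ℂ) (B : Matrix (Fin dB) (Fin dB) ℂ),
      IsState A ∧ IsState B ∧ ρ = Matrix.of fun p q => A p.1 q.1 * B p.2 q.2})

/-- Partial transpose on the second subsystem (single copy). -/
def ptrans1 {dA dB : ℕ} (M : Matrix (Fin dA × Fin dB) (Fin dA × Fin dB) ℂ) :
    Matrix (Fin dA × Fin dB) (Fin dA × Fin dB) ℂ :=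
  Matrix.of fun p q => M (p.1, q.2) (q.1, p.2)

/-- PPT states on a single copy. -/
def PPT1 (dA dB : ℕ) : Set (Matrix (Fin dA × Fin dB) (Fin dA × Fin dB) ℂ) :=
  {σ | IsState σ ∧ (ptrans1 σ).PosSemidef}

/-- Partial transpose over all `B` factors of an `n`-copy bipartite system. -/
def ptransN {dA dB n : ℕ}
    (M : Matrix (Fin n → Fin dA × Fin dB) (Fin n → Fin dA × Fin dB) ℂ) :
    Matrix (Fin n → Fin dA × Fin dB) (Fin n → Fin dA × Fin dB) ℂ :=
  Matrix.of fun i j => M (fun k => ((i k).1, (j k).2)) (fun k => ((j k).1, (i k).2))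

/-- PPT states on `n` copies, w.r.t. the bipartition grouping all `A` factors
against all `B` factors. -/
def PPTn (dA dB n : ℕ) :
    Set (Matrix (Fin n → Fin dA × Fin dB) (Fin n → Fin dA × Fin dB) ℂ) :=
  {σ | IsState σ ∧ (ptransN σ).PosSemidef}

/-- The maximally entangled state `Φ_d` on `ℂ^d ⊗ ℂ^d`. -/
def PhiMax (d : ℕ) : Matrix (Fin d × Fin d) (Fin d × Fin d) ℂ :=
  Matrix.of fun p q => if p.1 = p.2 ∧ q.1 = q.2 then ((d : ℂ))⁻¹ else 0

/-- The isotropic state `ρ_p = p Φ_d + (1-p)(I - Φ_d)/(d²-1)`. -/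
def iso (d : ℕ) (p : ℝ) : Matrix (Fin d × Fin d) (Fin d × Fin d) ℂ :=
  p • PhiMax d + ((1 - p) / ((d : ℝ) ^ 2 - 1)) • (1 - PhiMax d)


/-! ### Auxiliary lemmas for the AEP theorem -/

section AEPAux

private lemma rsmul_eq (r : ℝ) (A : Matrix ι ι ℂ) : r • A = (r : ℂ) • A := by
  ext i j
  simp [Complex.real_smul]

private lemma psd_smul {A : Matrix ι ι ℂ} (hA : A.PosSemidef) {r : ℝ} (hr : 0 ≤ r) :
    (r • A).PosSemidef := by
  rw [rsmul_eq]
  exact hA.smul (Complex.zero_le_real.2 hr)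

private lemma herm_rsmul {A : Matrix ι ι ℂ} (hA : A.IsHermitian) (r : ℝ) :
    (r • A).IsHermitian := by
  rw [rsmul_eq]
  unfold Matrix.IsHermitian at hA ⊢
  rw [Matrix.conjTranspose_smul, hA]
  simp [Complex.star_def, Complex.conj_ofReal]

private lemma psd_diag_nonneg {A : Matrix ι ι ℂ} (hA : A.PosSemidef) (i : ι) :
    0 ≤ A i i := by
  exact hA.diag_nonneg

private lemma psd_trace_nonneg {A : Matrix ι ι ℂ} (hA : A.PosSemidef) : 0 ≤ A.trace := by
  rw [Matrix.trace]
  exact Finset.sum_nonneg fun i _ => psd_diag_nonneg hA i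

private lemma re_trace_eq (M : Matrix ι ι ℂ) : M.trace.re = ∑ i, (M i i).re := by
  simp [Matrix.trace, Matrix.diag]

private lemma conj_unitary_psd {A : Matrix ι ι ℂ} (hA : A.PosSemidef)
    (U : Matrix ι ι ℂ) : (U * A * star U).PosSemidef := by
  rw [Matrix.star_eq_conjTranspose]
  exact hA.mul_mul_conjTranspose_same U

private lemma unitary_mul_star {A : Matrix ι ι ℂ} (hA : A.IsHermitian) :
    (hA.eigenvectorUnitary : Matrix ι ι ℂ) * star (hA.eigenvectorUnitary : Matrix ι ι ℂ) = 1 :=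
  Matrix.mem_unitaryGroup_iff.mp (hA.eigenvectorUnitary).2

private lemma star_mul_unitary {A : Matrix ι ι ℂ} (hA : A.IsHermitian) :
    star (hA.eigenvectorUnitary : Matrix ι ι ℂ) * (hA.eigenvectorUnitary : Matrix ι ι ℂ) = 1 :=
  Matrix.mem_unitaryGroup_iff'.mp (hA.eigenvectorUnitary).2

private lemma trace_conj_unitary {A : Matrix ι ι ℂ} (hA : A.IsHermitian) (D : Matrix ι ι ℂ) :
    ((hA.eigenvectorUnitary : Matrix ι ι ℂ) * D
      * star (hA.eigenvectorUnitary : Matrix ι ι ℂ)).trace = D.trace := by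
  rw [Matrix.trace_mul_cycle, star_mul_unitary hA, Matrix.one_mul]

private lemma spectral' {A : Matrix ι ι ℂ} (hA : A.IsHermitian) :
    A = (hA.eigenvectorUnitary : Matrix ι ι ℂ)
      * Matrix.diagonal (fun i => (hA.eigenvalues i : ℂ))
      * star (hA.eigenvectorUnitary : Matrix ι ι ℂ) := by
  simpa [Function.comp_def] using hA.spectral_theorem

private lemma trace_eq_sum_eig {A : Matrix ι ι ℂ} (hA : A.IsHermitian) :
    A.trace = ∑ i, (hA.eigenvalues i : ℂ) := by
  conv_lhs => rw [spectral' hA]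
  rw [trace_conj_unitary hA, Matrix.trace_diagonal]

private lemma conj_unitary_mul {A : Matrix ι ι ℂ} (hA : A.IsHermitian)
    (D E : Matrix ι ι ℂ) :
    ((hA.eigenvectorUnitary : Matrix ι ι ℂ) * D * star (hA.eigenvectorUnitary : Matrix ι ι ℂ))
      * ((hA.eigenvectorUnitary : Matrix ι ι ℂ) * E
        * star (hA.eigenvectorUnitary : Matrix ι ι ℂ))
    = (hA.eigenvectorUnitary : Matrix ι ι ℂ) * (D * E)
      * star (hA.eigenvectorUnitary : Matrix ι ι ℂ) := by
  have hVV := star_mul_unitary hA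
  simp only [Matrix.mul_assoc]
  rw [show star (hA.eigenvectorUnitary : Matrix ι ι ℂ)
      * ((hA.eigenvectorUnitary : Matrix ι ι ℂ)
        * (E * star (hA.eigenvectorUnitary : Matrix ι ι ℂ)))
      = E * star (hA.eigenvectorUnitary : Matrix ι ι ℂ) by
    rw [← Matrix.mul_assoc, hVV, Matrix.one_mul]]

open scoped MatrixOrder in
private lemma psd_sq_unique {B C : Matrix ι ι ℂ} (hB : B.PosSemidef) (hC : C.PosSemidef)
    (h : B ^ 2 = C ^ 2) : B = C := by
  rw [pow_two, pow_two] at h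
  exact (CFC.mul_self_eq_mul_self_iff B C (Matrix.nonneg_iff_posSemidef.2 hB)
    (Matrix.nonneg_iff_posSemidef.2 hC)).1 h

private def tnMat (A : Matrix ι ι ℂ) : Matrix ι ι ℂ :=
  (Matrix.isHermitian_conjTranspose_mul_self A).eigenvectorUnitary.1 *
    Matrix.diagonal (fun i => ((√((Matrix.isHermitian_conjTranspose_mul_self A).eigenvalues i) : ℝ) : ℂ)) *
    (star (Matrix.isHermitian_conjTranspose_mul_self A).eigenvectorUnitary : Matrix ι ι ℂ)

private lemma tnMat_psd (A : Matrix ι ι ℂ) : (tnMat A).PosSemidef := by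
  unfold tnMat
  exact conj_unitary_psd (Matrix.PosSemidef.diagonal fun i =>
    Complex.zero_le_real.2 (Real.sqrt_nonneg _)) _

private lemma tnMat_mul_self (A : Matrix ι ι ℂ) : tnMat A * tnMat A = A.conjTranspose * A := by
  have hH := Matrix.isHermitian_conjTranspose_mul_self A
  unfold tnMat
  rw [conj_unitary_mul, Matrix.diagonal_mul_diagonal]
  conv_rhs => rw [spectral' (Matrix.isHermitian_conjTranspose_mul_self A)]
  refine congrArg (fun D => _ * Matrix.diagonal D * _) (funext fun i => ?_)
  rw [← Complex.ofReal_mul, Real.mul_self_sqrt (Matrix.eigenvalues_conjTranspose_mul_self_nonneg A i)]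

private lemma traceNorm_eq_of {A B : Matrix ι ι ℂ} (hB : B.PosSemidef)
    (h : B ^ 2 = A.conjTranspose * A) : traceNorm A = B.trace.re := by
  have := psd_sq_unique hB (tnMat_psd A) (h.trans (by rw [pow_two, tnMat_mul_self]))
  rw [this]
  rfl

private lemma sqrt_hermitian {A : Matrix ι ι ℂ} (hA : A.IsHermitian) :
    traceNorm A
      = ((hA.eigenvectorUnitary : Matrix ι ι ℂ)
        * Matrix.diagonal (fun i => ((|hA.eigenvalues i| : ℝ) : ℂ))
        * star (hA.eigenvectorUnitary : Matrix ι ι ℂ)).trace.re := by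
  have hBpsd : ((hA.eigenvectorUnitary : Matrix ι ι ℂ)
      * Matrix.diagonal (fun i => ((|hA.eigenvalues i| : ℝ) : ℂ))
      * star (hA.eigenvectorUnitary : Matrix ι ι ℂ)).PosSemidef := by
    refine conj_unitary_psd (Matrix.PosSemidef.diagonal ?_) _
    intro i
    exact Complex.zero_le_real.2 (abs_nonneg _)
  have hsq : ((hA.eigenvectorUnitary : Matrix ι ι ℂ)
      * Matrix.diagonal (fun i => ((|hA.eigenvalues i| : ℝ) : ℂ))
      * star (hA.eigenvectorUnitary : Matrix ι ι ℂ)) ^ 2 = A.conjTranspose * A := by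
    rw [pow_two, conj_unitary_mul hA, hA.eq]
    conv_rhs => rw [spectral' hA]
    rw [conj_unitary_mul hA]
    rw [Matrix.diagonal_mul_diagonal, Matrix.diagonal_mul_diagonal]
    have hfun : (fun i => ((|hA.eigenvalues i| : ℝ) : ℂ) * ((|hA.eigenvalues i| : ℝ) : ℂ))
        = fun i => ((hA.eigenvalues i : ℝ) : ℂ) * ((hA.eigenvalues i : ℝ) : ℂ) := by
      funext i
      rw [← Complex.ofReal_mul, ← Complex.ofReal_mul, abs_mul_abs_self]
    rw [hfun]
  exact traceNorm_eq_of hBpsd hsq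

private lemma traceNorm_herm {A : Matrix ι ι ℂ} (hA : A.IsHermitian) :
    traceNorm A = ∑ i, |hA.eigenvalues i| := by
  rw [sqrt_hermitian hA, trace_conj_unitary hA, Matrix.trace_diagonal, Complex.re_sum]
  simp

private lemma traceNorm_psd {A : Matrix ι ι ℂ} (hA : A.PosSemidef) :
    traceNorm A = A.trace.re := by
  rw [traceNorm_herm hA.1, trace_eq_sum_eig hA.1, Complex.re_sum]
  simp only [Complex.ofReal_re]
  exact Finset.sum_congr rfl fun i _ => abs_of_nonneg (hA.eigenvalues_nonneg i)

private lemma traceNorm_smul (A : Matrix ι ι ℂ) {r : ℝ} (hr : 0 ≤ r) :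
    traceNorm (r • A) = r * traceNorm A := by
  have hB : (r • tnMat A).PosSemidef := psd_smul (tnMat_psd A) hr
  have hsq : (r • tnMat A) ^ 2 = (r • A).conjTranspose * (r • A) := by
    rw [pow_two, rsmul_eq, rsmul_eq r A, Matrix.conjTranspose_smul,
      smul_mul_smul_comm, smul_mul_smul_comm, tnMat_mul_self]
    simp [Complex.star_def, Complex.conj_ofReal]
  rw [traceNorm_eq_of hB hsq, traceNorm_eq_of (tnMat_psd A)
    (by rw [pow_two, tnMat_mul_self]), Matrix.trace_smul]
  simp [Complex.smul_re]

private lemma traceNorm_le_of_decomp {P Q : Matrix ι ι ℂ}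
    (hP : P.PosSemidef) (hQ : Q.PosSemidef) :
    traceNorm (P - Q) ≤ P.trace.re + Q.trace.re := by
  have hH : (P - Q).IsHermitian := hP.1.sub hQ.1
  rw [traceNorm_herm hH]
  have hP' : (star (hH.eigenvectorUnitary : Matrix ι ι ℂ) * P
      * (hH.eigenvectorUnitary : Matrix ι ι ℂ)).PosSemidef := by
    rw [Matrix.star_eq_conjTranspose]
    exact hP.conjTranspose_mul_mul_same _
  have hQ' : (star (hH.eigenvectorUnitary : Matrix ι ι ℂ) * Q
      * (hH.eigenvectorUnitary : Matrix ι ι ℂ)).PosSemidef := by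
    rw [Matrix.star_eq_conjTranspose]
    exact hQ.conjTranspose_mul_mul_same _
  have hdiag : star (hH.eigenvectorUnitary : Matrix ι ι ℂ) * (P - Q)
      * (hH.eigenvectorUnitary : Matrix ι ι ℂ)
      = Matrix.diagonal (fun i => (hH.eigenvalues i : ℂ)) := by
    have h := hH.conjStarAlgAut_star_eigenvectorUnitary
    rw [Unitary.conjStarAlgAut_star_apply] at h
    exact h
  have hEntry : ∀ i, (hH.eigenvalues i : ℂ)
      = (star (hH.eigenvectorUnitary : Matrix ι ι ℂ) * P
          * (hH.eigenvectorUnitary : Matrix ι ι ℂ)) i i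
        - (star (hH.eigenvectorUnitary : Matrix ι ι ℂ) * Q
          * (hH.eigenvectorUnitary : Matrix ι ι ℂ)) i i := by
    intro i
    rw [← Matrix.diagonal_apply_eq (fun i => (hH.eigenvalues i : ℂ)) i, ← hdiag,
      Matrix.mul_sub, Matrix.sub_mul, Matrix.sub_apply]
  have hval : ∀ i, hH.eigenvalues i
      = ((star (hH.eigenvectorUnitary : Matrix ι ι ℂ) * P
          * (hH.eigenvectorUnitary : Matrix ι ι ℂ)) i i).re
        - ((star (hH.eigenvectorUnitary : Matrix ι ι ℂ) * Q
          * (hH.eigenvectorUnitary : Matrix ι ι ℂ)) i i).re := by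
    intro i
    have := congrArg Complex.re (hEntry i)
    simpa using this
  have htr : ∀ (M : Matrix ι ι ℂ),
      (star (hH.eigenvectorUnitary : Matrix ι ι ℂ) * M
        * (hH.eigenvectorUnitary : Matrix ι ι ℂ)).trace = M.trace := by
    intro M
    rw [Matrix.trace_mul_cycle, unitary_mul_star hH, Matrix.one_mul]
  calc ∑ i, |hH.eigenvalues i|
      ≤ ∑ i, (((star (hH.eigenvectorUnitary : Matrix ι ι ℂ) * P
          * (hH.eigenvectorUnitary : Matrix ι ι ℂ)) i i).re
        + ((star (hH.eigenvectorUnitary : Matrix ι ι ℂ) * Q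
          * (hH.eigenvectorUnitary : Matrix ι ι ℂ)) i i).re) := by
        refine Finset.sum_le_sum fun i _ => ?_
        have hp := (Complex.le_def.1 (psd_diag_nonneg hP' i)).1
        have hq := (Complex.le_def.1 (psd_diag_nonneg hQ' i)).1
        simp only [Complex.zero_re] at hp hq
        rw [hval i]
        exact abs_le.2 ⟨by linarith, by linarith⟩
    _ = P.trace.re + Q.trace.re := by
        rw [Finset.sum_add_distrib, ← re_trace_eq, ← re_trace_eq, htr P, htr Q]

private lemma max_add_max_neg (a : ℝ) : max a 0 + max (-a) 0 = |a| := by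
  rcases le_total 0 a with h | h
  · rw [max_eq_left h, max_eq_right (neg_nonpos.2 h), add_zero, abs_of_nonneg h]
  · rw [max_eq_right h, max_eq_left (neg_nonneg.2 h), zero_add, abs_of_nonpos h]

private lemma herm_decomp {A : Matrix ι ι ℂ} (hA : A.IsHermitian) :
    ∃ P Q : Matrix ι ι ℂ, P.PosSemidef ∧ Q.PosSemidef ∧ A = P - Q ∧
      P.trace.re + Q.trace.re = traceNorm A := by
  refine ⟨(hA.eigenvectorUnitary : Matrix ι ι ℂ)
      * Matrix.diagonal (fun i => ((max (hA.eigenvalues i) 0 : ℝ) : ℂ))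
      * star (hA.eigenvectorUnitary : Matrix ι ι ℂ),
    (hA.eigenvectorUnitary : Matrix ι ι ℂ)
      * Matrix.diagonal (fun i => ((max (-hA.eigenvalues i) 0 : ℝ) : ℂ))
      * star (hA.eigenvectorUnitary : Matrix ι ι ℂ), ?_, ?_, ?_, ?_⟩
  · exact conj_unitary_psd (Matrix.PosSemidef.diagonal fun i =>
      Complex.zero_le_real.2 (le_max_right _ _)) _
  · exact conj_unitary_psd (Matrix.PosSemidef.diagonal fun i =>
      Complex.zero_le_real.2 (le_max_right _ _)) _
  · rw [← Matrix.sub_mul, ← Matrix.mul_sub, Matrix.diagonal_sub]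
    conv_lhs => rw [spectral' hA]
    have hfun : (fun i => ((max (hA.eigenvalues i) 0 : ℝ) : ℂ)
        - ((max (-hA.eigenvalues i) 0 : ℝ) : ℂ))
        = fun i => ((hA.eigenvalues i : ℝ) : ℂ) := by
      funext i
      rw [← Complex.ofReal_sub, max_zero_sub_max_neg_zero_eq_self]
    rw [hfun]
  · rw [trace_conj_unitary hA, trace_conj_unitary hA, Matrix.trace_diagonal,
      Matrix.trace_diagonal, Complex.re_sum, Complex.re_sum, traceNorm_herm hA]
    simp only [Complex.ofReal_re]
    rw [← Finset.sum_add_distrib]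
    exact Finset.sum_congr rfl fun i _ => max_add_max_neg _

end AEPAux

private lemma traceNorm_add_le {A B : Matrix ι ι ℂ} (hA : A.IsHermitian) (hB : B.IsHermitian) :
    traceNorm (A + B) ≤ traceNorm A + traceNorm B := by
  obtain ⟨P₁, Q₁, hP₁, hQ₁, hd₁, ht₁⟩ := herm_decomp hA
  obtain ⟨P₂, Q₂, hP₂, hQ₂, hd₂, ht₂⟩ := herm_decomp hB
  have hAB : A + B = (P₁ + P₂) - (Q₁ + Q₂) := by rw [hd₁, hd₂]; abel
  rw [hAB]
  refine (traceNorm_le_of_decomp (hP₁.add hP₂) (hQ₁.add hQ₂)).trans ?_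
  rw [← ht₁, ← ht₂, Matrix.trace_add, Matrix.trace_add]
  simp only [Complex.add_re]
  ring_nf
  exact le_refl _

private lemma state_trace_re {ρ : Matrix ι ι ℂ} (hρ : IsState ρ) : ρ.trace.re = 1 := by
  rw [hρ.2]; simp

private lemma traceNorm_states_sub_le {ρ σ : Matrix ι ι ℂ} (hρ : IsState ρ) (hσ : IsState σ) :
    traceNorm (ρ - σ) ≤ 2 := by
  have h := traceNorm_le_of_decomp hρ.1 hσ.1
  rw [state_trace_re hρ, state_trace_re hσ] at h
  linarith

private lemma ball_est {ω' τ σ'' : Matrix ι ι ℂ} (hω' : IsState ω') (hτ : IsState τ)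
    (hσ : IsState σ'') {δ ε : ℝ} (hδ0 : 0 ≤ δ) (hδ1 : δ ≤ 1) (hε : 0 ≤ ε)
    (hb : 1 / 2 * traceNorm (ω' - τ) ≤ ε) :
    1 / 2 * traceNorm ((1 - δ) • ω' + δ • σ'' - τ) ≤ ε + δ := by
  have hrw : (1 - δ) • ω' + δ • σ'' - τ = (1 - δ) • (ω' - τ) + δ • (σ'' - τ) := by module
  rw [hrw]
  have h1 := traceNorm_add_le (herm_rsmul (hω'.1.1.sub hτ.1.1) (1 - δ))
    (herm_rsmul (hσ.1.1.sub hτ.1.1) δ)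
  rw [traceNorm_smul _ (by linarith : (0:ℝ) ≤ 1 - δ), traceNorm_smul _ hδ0] at h1
  have h2 := traceNorm_states_sub_le hσ hτ
  have h3 : traceNorm (ω' - τ) ≤ 2 * ε := by linarith
  nlinarith [mul_le_mul_of_nonneg_left h3 (by linarith : (0:ℝ) ≤ 1 - δ),
    mul_le_mul_of_nonneg_left h2 hδ0]

private lemma tpow_trace (ρ : Matrix ι ι ℂ) (n : ℕ) : (tpow ρ n).trace = ρ.trace ^ n := by
  have h1 : (tpow ρ n).trace = ∑ g : Fin n → ι, ∏ k, ρ (g k) (g k) := rfl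
  calc (tpow ρ n).trace
      = ∑ g ∈ Fintype.piFinset (fun _ : Fin n => (Finset.univ : Finset ι)),
          ∏ k, ρ (g k) (g k) := by rw [h1, Fintype.piFinset_univ]
    _ = ∏ _k : Fin n, ∑ x : ι, ρ x x :=
        (Finset.prod_univ_sum (fun _ : Fin n => (Finset.univ : Finset ι))
          (fun _ x => ρ x x)).symm
    _ = ρ.trace ^ n := by simp [Matrix.trace, Matrix.diag, Finset.prod_const]

open scoped MatrixOrder in
private lemma tpow_psd {ρ : Matrix ι ι ℂ} (hρ : ρ.PosSemidef) (n : ℕ) :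
    (tpow ρ n).PosSemidef := by
  obtain ⟨B, hB⟩ : ∃ B : Matrix ι ι ℂ, ρ = B.conjTranspose * B :=
    ⟨CFC.sqrt ρ, by
      rw [(Matrix.nonneg_iff_posSemidef.1 (CFC.sqrt_nonneg ρ)).1.eq,
        CFC.sqrt_mul_sqrt_self ρ (Matrix.nonneg_iff_posSemidef.2 hρ)]⟩
  have hkey : tpow ρ n = (tpow B n).conjTranspose * tpow B n := by
    ext i j
    have lhs : tpow ρ n i j = ∏ k, ∑ x : ι, star (B x (i k)) * B x (j k) := by
      simp [tpow, hB, Matrix.mul_apply, Matrix.conjTranspose_apply]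
    have rhs : ((tpow B n).conjTranspose * tpow B n) i j
        = ∑ g : Fin n → ι, star (∏ k, B (g k) (i k)) * ∏ k, B (g k) (j k) := by
      simp [tpow, Matrix.mul_apply, Matrix.conjTranspose_apply]
    rw [lhs, rhs]
    have hps := Finset.prod_univ_sum (fun _ : Fin n => (Finset.univ : Finset ι))
      (fun k x => star (B x (i k)) * B x (j k))
    rw [Fintype.piFinset_univ] at hps
    rw [hps]
    refine Finset.sum_congr rfl fun g _ => ?_
    rw [star_prod, Finset.prod_mul_distrib]
  rw [hkey]
  exact Matrix.posSemidef_conjTranspose_mul_self _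

private lemma isState_tpow {ρ : Matrix ι ι ℂ} (hρ : IsState ρ) (n : ℕ) : IsState (tpow ρ n) :=
  ⟨tpow_psd hρ.1 n, by rw [tpow_trace, hρ.2, one_pow]⟩

private lemma ereal_le_of_forall_add {a b : EReal} (hb : b ≠ ⊥)
    (h : ∀ η : ℝ, 0 < η → a ≤ b + (η : EReal)) : a ≤ b := by
  by_contra hab
  push_neg at hab
  have hbt : b ≠ ⊤ := fun hh => (hh ▸ hab).not_ge le_top
  obtain ⟨y, hy1, hy2⟩ := EReal.exists_between_coe_real hab
  obtain ⟨s, hs⟩ : ∃ s : ℝ, b = (s : EReal) := ⟨b.toReal, (EReal.coe_toReal hbt hb).symm⟩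
  have hry : s < y := by rw [hs] at hy1; exact_mod_cast hy1
  have h2 := h (y - s) (by linarith)
  rw [hs, ← EReal.coe_add] at h2
  have h3 : a ≤ (y : EReal) := by
    have hsy : s + (y - s) = y := by ring
    rwa [hsy] at h2
  exact absurd (h3.trans_lt hy2) (lt_irrefl a)

private lemma dmax_nonneg {ρ σ : Matrix ι ι ℂ} (hρ : IsState ρ) (hσ : IsState σ) :
    0 ≤ Dmax σ ρ := by
  refine le_sInf ?_
  rintro x ⟨l, hl, hL, rfl⟩
  have h1 : (0:ℂ) ≤ (l • ρ - σ).trace := psd_trace_nonneg hL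
  rw [Matrix.trace_sub, Matrix.trace_smul, hρ.2, hσ.2] at h1
  have h2 : (0:ℂ) ≤ ((l - 1 : ℝ) : ℂ) := by
    convert h1 using 1
    push_cast [Complex.real_smul]
    ring
  have h3 := Complex.zero_le_real.1 h2
  have : 0 ≤ Real.logb 2 l := Real.logb_nonneg one_lt_two (by linarith)
  exact_mod_cast this

private lemma logRs_nonneg (F : Set (Matrix ι ι ℂ)) (ρ : Matrix ι ι ℂ) : 0 ≤ logRs F ρ := by
  refine le_sInf ?_
  rintro x ⟨l, hl, -, rfl⟩
  have : 0 ≤ Real.logb 2 (1 + l) := Real.logb_nonneg one_lt_two (by linarith)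
  exact_mod_cast this

private lemma logRs_le_DOmegasF {F : Set (Matrix ι ι ℂ)} (hFs : ∀ σ ∈ F, IsState σ)
    {ρ : Matrix ι ι ℂ} (hρ : IsState ρ) : logRs F ρ ≤ DOmegasF F ρ := by
  refine le_sInf ?_
  rintro x ⟨σ, hσF, rfl⟩
  have h1 : logRs F ρ ≤ Ds F ρ σ := by
    refine le_sInf ?_
    rintro x ⟨l, hl, ⟨t, ht, σ', hσ', heq⟩, rfl⟩
    have htr : ((l : ℂ)) - 1 = (t : ℂ) := by
      have h0 := congrArg Matrix.trace heq
      rw [Matrix.trace_sub, Matrix.trace_smul, Matrix.trace_smul, hρ.2,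
        (hFs σ hσF).2, (hFs σ' hσ').2] at h0
      simpa [Complex.real_smul] using h0
    have htl : t = l - 1 := by
      have hcc : ((t : ℝ) : ℂ) = ((l - 1 : ℝ) : ℂ) := by rw [← htr]; push_cast; ring
      exact_mod_cast hcc
    have hρσ : ρ + t • σ' = l • σ := by rw [← heq]; abel
    have hmem : ((1 + t)⁻¹ • (ρ + t • σ')) ∈ F := by
      rw [hρσ, show (1:ℝ) + t = l by linarith, smul_smul,
        inv_mul_cancel₀ (ne_of_gt hl), one_smul]
      exact hσF
    have h2 : logRs F ρ ≤ ((Real.logb 2 (1 + t) : ℝ) : EReal) :=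
      sInf_le ⟨t, ht, ⟨σ', hσ', hmem⟩, rfl⟩
    rw [show (1:ℝ) + t = l by linarith] at h2
    exact h2
  refine h1.trans ?_
  have := add_le_add_right (dmax_nonneg hρ (hFs σ hσF)) (Ds F ρ σ)
  simpa using this

private lemma mix_eq1 (ω' σ : Matrix ι ι ℂ) {l δ : ℝ} (hl : (1:ℝ) + l ≠ 0) :
    ((1 - δ) * (1 + l) + δ) • ((1 + l)⁻¹ • (ω' + l • σ))
      - ((1 - δ) • ω' + δ • ((1 + l)⁻¹ • (ω' + l • σ)))
    = ((1 - δ) * l) • σ := by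
  match_scalars <;> field_simp <;> ring

private lemma mix_eq2 (ω' σ'' : Matrix ι ι ℂ) {δ : ℝ} (hδ : δ ≠ 0) :
    δ⁻¹ • ((1 - δ) • ω' + δ • σ'') - σ'' = (δ⁻¹ * (1 - δ)) • ω' := by
  match_scalars <;> field_simp <;> ring

private lemma DOmegasF_le_mix {F : Set (Matrix ι ι ℂ)} {ω' σ : Matrix ι ι ℂ}
    (hσF : σ ∈ F) {l δ : ℝ} (hl : 0 ≤ l) (hδ0 : 0 < δ) (hδ1 : δ < 1)
    (hmixF : ((1 + l)⁻¹ • (ω' + l • σ)) ∈ F) (hω' : ω'.PosSemidef) :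
    DOmegasF F ((1 - δ) • ω' + δ • ((1 + l)⁻¹ • (ω' + l • σ)))
      ≤ ((Real.logb 2 (1 + l) + Real.logb 2 δ⁻¹ : ℝ) : EReal) := by
  have h1l : (0:ℝ) < 1 + l := by linarith
  have hDs : Ds F ((1 - δ) • ω' + δ • ((1 + l)⁻¹ • (ω' + l • σ)))
      ((1 + l)⁻¹ • (ω' + l • σ)) ≤ ((Real.logb 2 (1 + l) : ℝ) : EReal) := by
    have hpos : 0 < (1 - δ) * (1 + l) + δ := by nlinarith
    have hmem : (((1 - δ) * (1 + l) + δ) • ((1 + l)⁻¹ • (ω' + l • σ))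
        - ((1 - δ) • ω' + δ • ((1 + l)⁻¹ • (ω' + l • σ)))) ∈ cone F := by
      show ∃ t : ℝ, 0 ≤ t ∧ ∃ σ' ∈ F,
        (((1 - δ) * (1 + l) + δ) • ((1 + l)⁻¹ • (ω' + l • σ))
          - ((1 - δ) • ω' + δ • ((1 + l)⁻¹ • (ω' + l • σ)))) = t • σ'
      exact ⟨(1 - δ) * l, by nlinarith, σ, hσF, mix_eq1 (δ := δ) ω' σ (ne_of_gt h1l)⟩
    have hmemDs : ((Real.logb 2 ((1 - δ) * (1 + l) + δ) : ℝ) : EReal) ∈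
        {x : EReal | ∃ l2 : ℝ, 0 < l2 ∧
          (l2 • ((1 + l)⁻¹ • (ω' + l • σ))
            - ((1 - δ) • ω' + δ • ((1 + l)⁻¹ • (ω' + l • σ)))) ∈ cone F ∧
          x = ((Real.logb 2 l2 : ℝ) : EReal)} := ⟨_, hpos, hmem, rfl⟩
    refine (sInf_le hmemDs).trans ?_
    have : Real.logb 2 ((1 - δ) * (1 + l) + δ) ≤ Real.logb 2 (1 + l) :=
      Real.logb_le_logb_of_le one_lt_two hpos (by nlinarith)
    exact_mod_cast this
  have hDmax : Dmax ((1 + l)⁻¹ • (ω' + l • σ)) ((1 - δ) • ω' + δ • ((1 + l)⁻¹ • (ω' + l • σ)))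
      ≤ ((Real.logb 2 δ⁻¹ : ℝ) : EReal) := by
    have hLoew : Loewner ((1 + l)⁻¹ • (ω' + l • σ))
        (δ⁻¹ • ((1 - δ) • ω' + δ • ((1 + l)⁻¹ • (ω' + l • σ)))) := by
      unfold Loewner
      rw [mix_eq2 _ _ (ne_of_gt hδ0)]
      exact psd_smul hω' (mul_nonneg (inv_nonneg.2 hδ0.le) (by linarith))
    exact sInf_le ⟨δ⁻¹, inv_pos.2 hδ0, hLoew, rfl⟩
  have hmemΩ : DOmegasF F ((1 - δ) • ω' + δ • ((1 + l)⁻¹ • (ω' + l • σ)))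
      ≤ Ds F ((1 - δ) • ω' + δ • ((1 + l)⁻¹ • (ω' + l • σ))) ((1 + l)⁻¹ • (ω' + l • σ))
        + Dmax ((1 + l)⁻¹ • (ω' + l • σ)) ((1 - δ) • ω' + δ • ((1 + l)⁻¹ • (ω' + l • σ))) :=
    sInf_le ⟨_, hmixF, rfl⟩
  refine hmemΩ.trans ?_
  refine (add_le_add hDs hDmax).trans_eq ?_
  rw [← EReal.coe_add]

private lemma key_step {F : Set (Matrix ι ι ℂ)} (hFs : ∀ σ ∈ F, IsState σ)
    (hRsF : ∀ τ' : Matrix ι ι ℂ, IsState τ' → Rs F τ' < ⊤) {τ : Matrix ι ι ℂ} (hτ : IsState τ)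
    {ε δ c : ℝ} (hε : 0 < ε) (hδ0 : 0 < δ) (hδ1 : δ < 1) (hc : 0 ≤ c) :
    sInf {x : EReal | ∃ ω' : Matrix ι ι ℂ, IsState ω' ∧
        1 / 2 * traceNorm (ω' - τ) ≤ ε + δ ∧ x = ((c : ℝ) : EReal) * DOmegasF F ω'}
      ≤ sInf {x : EReal | ∃ ω' : Matrix ι ι ℂ, IsState ω' ∧
          1 / 2 * traceNorm (ω' - τ) ≤ ε ∧ x = ((c : ℝ) : EReal) * logRs F ω'}
        + ((c * Real.logb 2 δ⁻¹ : ℝ) : EReal) := by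
  set Ag := sInf {x : EReal | ∃ ω' : Matrix ι ι ℂ, IsState ω' ∧
      1 / 2 * traceNorm (ω' - τ) ≤ ε ∧ x = ((c : ℝ) : EReal) * logRs F ω'} with hAgdef
  have hAg0 : 0 ≤ Ag := by
    refine le_sInf ?_
    rintro x ⟨ω', hω', hball, rfl⟩
    exact mul_nonneg (by exact_mod_cast hc) (logRs_nonneg F ω')
  have hAgbot : Ag ≠ ⊥ := fun hh => by simp [hh] at hAg0
  refine ereal_le_of_forall_add ?_ ?_
  · rw [Ne, EReal.add_eq_bot_iff]
    push_neg
    exact ⟨hAgbot, EReal.coe_ne_bot _⟩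
  intro η hη
  by_cases htop : Ag = ⊤
  · rw [htop, EReal.top_add_of_ne_bot (EReal.coe_ne_bot _),
      EReal.top_add_of_ne_bot (EReal.coe_ne_bot _)]
    exact le_top
  obtain ⟨s0, hs0⟩ : ∃ s0 : ℝ, Ag = (s0 : EReal) :=
    ⟨Ag.toReal, (EReal.coe_toReal htop hAgbot).symm⟩
  have hlt : Ag < Ag + ((η / 2 : ℝ) : EReal) := by
    rw [hs0, ← EReal.coe_add]
    exact_mod_cast (by linarith : s0 < s0 + η / 2)
  obtain ⟨x, hxS, hxlt⟩ := sInf_lt_iff.mp hlt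
  obtain ⟨ωh, hωhS, hball, rfl⟩ := hxS
  -- feasibility of the robustness for ωh
  have hne : ∃ l : ℝ, 0 ≤ l ∧ (∃ σ ∈ F, ((1 + l)⁻¹ • (ωh + l • σ)) ∈ F) := by
    by_contra hno
    have hempty : {x : EReal | ∃ l : ℝ, 0 ≤ l ∧ (∃ σ ∈ F, ((1 + l)⁻¹ • (ωh + l • σ)) ∈ F) ∧
        x = ((l : ℝ) : EReal)} = ∅ := by
      ext x
      simp only [Set.mem_setOf_eq, Set.mem_empty_iff_false, iff_false]
      rintro ⟨l, hl, hfe, -⟩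
      exact hno ⟨l, hl, hfe⟩
    have : Rs F ωh = ⊤ := by rw [Rs, hempty, sInf_empty]
    exact (hRsF ωh hωhS).ne this
  obtain ⟨l₀, hl₀, hfeas₀⟩ := hne
  have hmemL : ((Real.logb 2 (1 + l₀) : ℝ) : EReal) ∈ {x : EReal | ∃ l : ℝ, 0 ≤ l ∧
      (∃ σ ∈ F, ((1 + l)⁻¹ • (ωh + l • σ)) ∈ F) ∧
      x = ((Real.logb 2 (1 + l) : ℝ) : EReal)} := ⟨l₀, hl₀, hfeas₀, rfl⟩
  have hlogne : logRs F ωh ≠ ⊤ :=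
    ne_top_of_le_ne_top (EReal.coe_ne_top _) (sInf_le hmemL)
  have hlogbot : logRs F ωh ≠ ⊥ := fun hh => by
    have := logRs_nonneg F ωh
    simp [hh] at this
  obtain ⟨r, hrr⟩ : ∃ r : ℝ, logRs F ωh = (r : EReal) :=
    ⟨(logRs F ωh).toReal, (EReal.coe_toReal hlogne hlogbot).symm⟩
  have hη₂pos : 0 < η / (2 * (c + 1)) := by positivity
  have hlt2 : logRs F ωh < ((r + η / (2 * (c + 1)) : ℝ) : EReal) := by
    rw [hrr]
    exact_mod_cast (by linarith : r < r + η / (2 * (c + 1)))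
  obtain ⟨x', hx'S, hx'lt⟩ := sInf_lt_iff.mp hlt2
  obtain ⟨l', hl', ⟨σ, hσF, hmixF⟩, rfl⟩ := hx'S
  have hlogb' : Real.logb 2 (1 + l') < r + η / (2 * (c + 1)) := by exact_mod_cast hx'lt
  -- build the perturbed state
  have hσ''S : IsState ((1 + l')⁻¹ • (ωh + l' • σ)) := hFs _ hmixF
  have hω''S : IsState ((1 - δ) • ωh + δ • ((1 + l')⁻¹ • (ωh + l' • σ))) := by
    constructor
    · exact (psd_smul hωhS.1 (by linarith)).add (psd_smul hσ''S.1 hδ0.le)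
    · rw [Matrix.trace_add, Matrix.trace_smul, Matrix.trace_smul, hωhS.2, hσ''S.2]
      simp [Complex.real_smul]
  have hball'' := ball_est hωhS hτ hσ''S hδ0.le hδ1.le hε.le hball
  have hDom := DOmegasF_le_mix hσF hl' hδ0 hδ1 hmixF hωhS.1
  have hmemΩ2 : ((c : ℝ) : EReal) * DOmegasF F ((1 - δ) • ωh + δ • ((1 + l')⁻¹ • (ωh + l' • σ)))
      ∈ {x : EReal | ∃ ω' : Matrix ι ι ℂ, IsState ω' ∧
          1 / 2 * traceNorm (ω' - τ) ≤ ε + δ ∧ x = ((c : ℝ) : EReal) * DOmegasF F ω'} :=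
    ⟨_, hω''S, hball'', rfl⟩
  refine (sInf_le hmemΩ2).trans ?_
  have step1 : ((c : ℝ) : EReal) * DOmegasF F ((1 - δ) • ωh + δ • ((1 + l')⁻¹ • (ωh + l' • σ)))
      ≤ ((c : ℝ) : EReal) * ((Real.logb 2 (1 + l') + Real.logb 2 δ⁻¹ : ℝ) : EReal) :=
    mul_le_mul_of_nonneg_left hDom (by exact_mod_cast hc)
  refine step1.trans ?_
  have hcoe : ((c : ℝ) : EReal) * ((Real.logb 2 (1 + l') + Real.logb 2 δ⁻¹ : ℝ) : EReal)
      = ((c * (Real.logb 2 (1 + l') + Real.logb 2 δ⁻¹) : ℝ) : EReal) := by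
    rw [EReal.coe_mul]
  rw [hcoe]
  have hreal : c * (Real.logb 2 (1 + l') + Real.logb 2 δ⁻¹)
      ≤ c * r + η / 2 + c * Real.logb 2 δ⁻¹ := by
    have hcη : c * (η / (2 * (c + 1))) ≤ η / 2 := by
      rw [← mul_div_assoc, div_le_div_iff₀ (by positivity) (by norm_num : (0:ℝ) < 2)]
      nlinarith [mul_nonneg hc hη.le]
    nlinarith [mul_le_mul_of_nonneg_left hlogb'.le hc, hcη]
  have hmono : ((c * (Real.logb 2 (1 + l') + Real.logb 2 δ⁻¹) : ℝ) : EReal)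
      ≤ ((c * r + η / 2 + c * Real.logb 2 δ⁻¹ : ℝ) : EReal) := by exact_mod_cast hreal
  refine hmono.trans ?_
  have hx : ((c * r : ℝ) : EReal) = ((c : ℝ) : EReal) * logRs F ωh := by
    rw [EReal.coe_mul, ← hrr]
  have hsplit : ((c * r + η / 2 + c * Real.logb 2 δ⁻¹ : ℝ) : EReal)
      = ((c * r : ℝ) : EReal) + ((η / 2 : ℝ) : EReal)
        + ((c * Real.logb 2 δ⁻¹ : ℝ) : EReal) := by
    rw [← EReal.coe_add, ← EReal.coe_add]
  rw [hsplit, hx]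
  have hle1 : ((c : ℝ) : EReal) * logRs F ωh ≤ Ag + ((η / 2 : ℝ) : EReal) := hxlt.le
  calc ((c : ℝ) : EReal) * logRs F ωh + ((η / 2 : ℝ) : EReal)
        + ((c * Real.logb 2 δ⁻¹ : ℝ) : EReal)
      ≤ (Ag + ((η / 2 : ℝ) : EReal)) + ((η / 2 : ℝ) : EReal)
        + ((c * Real.logb 2 δ⁻¹ : ℝ) : EReal) := by
        exact add_le_add_left (add_le_add_left hle1 _) _
    _ = Ag + ((c * Real.logb 2 δ⁻¹ : ℝ) : EReal)
        + (((η / 2 : ℝ) : EReal) + ((η / 2 : ℝ) : EReal)) := by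
        abel
    _ = Ag + ((c * Real.logb 2 δ⁻¹ : ℝ) : EReal) + ((η : ℝ) : EReal) := by
        rw [← EReal.coe_add]
        norm_num

private lemma sInf_le_sInf_of_forall_exists_le {α : Type*} [CompleteLattice α] {s t : Set α}
    (h : ∀ x ∈ s, ∃ y ∈ t, y ≤ x) : sInf t ≤ sInf s :=
  le_sInf fun x hx => by
    obtain ⟨y, hy, hyx⟩ := h x hx
    exact (sInf_le hy).trans hyx

/-- **AEP for the free projective robustness.**
In a free-state family satisfying Axioms I–IV with finite standard robustness on all
states, the smoothed regularization of `D_{Ω,s,F}` coincides with the smoothed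
regularization of the logarithmic standard robustness `log₂(1 + R_{s,F})`. -/
theorem free_projective_robustness_AEP {d : ℕ}
    (F : ∀ n : ℕ, Set (Matrix (Fin n → Fin d) (Fin n → Fin d) ℂ))
    (hF : IsFreeFamily d F)
    (hRs : ∀ n, ∀ τ : Matrix (Fin n → Fin d) (Fin n → Fin d) ℂ,
      IsState τ → Rs (F n) τ < ⊤)
    (ω : Matrix (Fin d) (Fin d) ℂ) (hω : IsState ω) :
    ∃ L : EReal,
      Tendsto (fun ε : ℝ =>
          limsup (fun n : ℕ =>
            sInf {x : EReal | ∃ ω' : Matrix (Fin n → Fin d) (Fin n → Fin d) ℂ,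
              IsState ω' ∧ (1 / 2) * traceNorm (ω' - tpow ω n) ≤ ε ∧
              x = (((n : ℝ)⁻¹ : ℝ) : EReal) * DOmegasF (F n) ω'}) atTop)
        (nhdsWithin 0 (Set.Ioi 0)) (nhds L) ∧
      Tendsto (fun ε : ℝ =>
          limsup (fun n : ℕ =>
            sInf {x : EReal | ∃ ω' : Matrix (Fin n → Fin d) (Fin n → Fin d) ℂ,
              IsState ω' ∧ (1 / 2) * traceNorm (ω' - tpow ω n) ≤ ε ∧
              x = (((n : ℝ)⁻¹ : ℝ) : EReal) * logRs (F n) ω'}) atTop)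
        (nhdsWithin 0 (Set.Ioi 0)) (nhds L) := by
  have hτS : ∀ n : ℕ, IsState (tpow ω n) := fun n => isState_tpow hω n
  set f : ℝ → EReal := fun ε : ℝ =>
    limsup (fun n : ℕ =>
      sInf {x : EReal | ∃ ω' : Matrix (Fin n → Fin d) (Fin n → Fin d) ℂ,
        IsState ω' ∧ (1 / 2) * traceNorm (ω' - tpow ω n) ≤ ε ∧
        x = (((n : ℝ)⁻¹ : ℝ) : EReal) * DOmegasF (F n) ω'}) atTop with hfdef
  set g : ℝ → EReal := fun ε : ℝ =>
    limsup (fun n : ℕ =>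
      sInf {x : EReal | ∃ ω' : Matrix (Fin n → Fin d) (Fin n → Fin d) ℂ,
        IsState ω' ∧ (1 / 2) * traceNorm (ω' - tpow ω n) ≤ ε ∧
        x = (((n : ℝ)⁻¹ : ℝ) : EReal) * logRs (F n) ω'}) atTop with hgdef
  have hfanti : AntitoneOn f (Set.Ioi (0:ℝ)) := by
    intro a _ b _ hab
    refine limsup_le_limsup (Filter.Eventually.of_forall fun n => ?_)
    refine sInf_le_sInf ?_
    rintro x ⟨ω', h1, h2, rfl⟩
    exact ⟨ω', h1, h2.trans hab, rfl⟩
  have hganti : AntitoneOn g (Set.Ioi (0:ℝ)) := by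
    intro a _ b _ hab
    refine limsup_le_limsup (Filter.Eventually.of_forall fun n => ?_)
    refine sInf_le_sInf ?_
    rintro x ⟨ω', h1, h2, rfl⟩
    exact ⟨ω', h1, h2.trans hab, rfl⟩
  have hgf : ∀ ε : ℝ, g ε ≤ f ε := by
    intro ε
    refine limsup_le_limsup (Filter.Eventually.of_forall fun n => ?_)
    refine sInf_le_sInf_of_forall_exists_le ?_
    rintro x ⟨ω', h1, h2, rfl⟩
    refine ⟨(((n : ℝ)⁻¹ : ℝ) : EReal) * logRs (F n) ω', ⟨ω', h1, h2, rfl⟩, ?_⟩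
    refine mul_le_mul_of_nonneg_left (logRs_le_DOmegasF (hF.states n) h1) ?_
    exact_mod_cast inv_nonneg.2 (Nat.cast_nonneg n)
  have hkey : ∀ ε₀ δ : ℝ, 0 < ε₀ → 0 < δ → δ < 1 → f (ε₀ + δ) ≤ g ε₀ := by
    intro ε₀ δ hε₀ hδ0 hδ1
    have hstep : ∀ n : ℕ,
        sInf {x : EReal | ∃ ω' : Matrix (Fin n → Fin d) (Fin n → Fin d) ℂ,
          IsState ω' ∧ (1 / 2) * traceNorm (ω' - tpow ω n) ≤ ε₀ + δ ∧
          x = (((n : ℝ)⁻¹ : ℝ) : EReal) * DOmegasF (F n) ω'}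
        ≤ sInf {x : EReal | ∃ ω' : Matrix (Fin n → Fin d) (Fin n → Fin d) ℂ,
            IsState ω' ∧ (1 / 2) * traceNorm (ω' - tpow ω n) ≤ ε₀ ∧
            x = (((n : ℝ)⁻¹ : ℝ) : EReal) * logRs (F n) ω'}
          + (((n : ℝ)⁻¹ * Real.logb 2 δ⁻¹ : ℝ) : EReal) := fun n =>
      key_step (hF.states n) (hRs n) (hτS n) hε₀ hδ0 hδ1 (inv_nonneg.2 (Nat.cast_nonneg n))
    have hlimc : Tendsto (fun n : ℕ => (((n : ℝ)⁻¹ * Real.logb 2 δ⁻¹ : ℝ) : EReal))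
        atTop (nhds (0 : EReal)) := by
      have h0 : ((0 : ℝ) : EReal) = (0 : EReal) := rfl
      rw [← h0, EReal.tendsto_coe]
      have h1 : Tendsto (fun n : ℕ => ((n : ℝ))⁻¹) atTop (nhds 0) :=
        tendsto_inv_atTop_zero.comp tendsto_natCast_atTop_atTop
      simpa using h1.mul_const (Real.logb 2 δ⁻¹)
    have hlc : limsup (fun n : ℕ => (((n : ℝ)⁻¹ * Real.logb 2 δ⁻¹ : ℝ) : EReal)) atTop
        = 0 := hlimc.limsup_eq
    calc f (ε₀ + δ)
        ≤ limsup (fun n : ℕ =>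
            sInf {x : EReal | ∃ ω' : Matrix (Fin n → Fin d) (Fin n → Fin d) ℂ,
              IsState ω' ∧ (1 / 2) * traceNorm (ω' - tpow ω n) ≤ ε₀ ∧
              x = (((n : ℝ)⁻¹ : ℝ) : EReal) * logRs (F n) ω'}
            + (((n : ℝ)⁻¹ * Real.logb 2 δ⁻¹ : ℝ) : EReal)) atTop := by
          exact limsup_le_limsup (Filter.Eventually.of_forall hstep)
      _ ≤ g ε₀ := by
          have hadd := EReal.limsup_add_le (f := atTop)
            (u := fun n : ℕ =>
              sInf {x : EReal | ∃ ω' : Matrix (Fin n → Fin d) (Fin n → Fin d) ℂ,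
                IsState ω' ∧ (1 / 2) * traceNorm (ω' - tpow ω n) ≤ ε₀ ∧
                x = (((n : ℝ)⁻¹ : ℝ) : EReal) * logRs (F n) ω'})
            (v := fun n : ℕ => (((n : ℝ)⁻¹ * Real.logb 2 δ⁻¹ : ℝ) : EReal))
            (Or.inr (by rw [hlc]; norm_num)) (Or.inr (by rw [hlc]; norm_num))
          rw [hlc, add_zero] at hadd
          exact hadd
  refine ⟨sSup (g '' Set.Ioi 0), ?_, hganti.tendsto_nhdsGT (OrderTop.bddAbove _)⟩
  have himg : sSup (f '' Set.Ioi 0) = sSup (g '' Set.Ioi 0) := by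
    apply le_antisymm
    · refine sSup_le ?_
      rintro x ⟨ε, hε, rfl⟩
      have hεpos : (0:ℝ) < ε := hε
      have hδ0 : 0 < min (ε / 2) (1 / 2) := lt_min (by linarith) (by norm_num)
      have hδ1 : min (ε / 2) (1 / 2) < 1 := (min_le_right _ _).trans_lt (by norm_num)
      have hε₀ : 0 < ε - min (ε / 2) (1 / 2) := by
        have h1 := min_le_left (ε / 2) (1 / 2)
        linarith
      have h1 := hkey (ε - min (ε / 2) (1 / 2)) (min (ε / 2) (1 / 2)) hε₀ hδ0 hδ1
      have h2 : ε - min (ε / 2) (1 / 2) + min (ε / 2) (1 / 2) = ε := by ring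
      rw [h2] at h1
      exact le_sSup_of_le ⟨_, hε₀, rfl⟩ h1
    · refine sSup_le ?_
      rintro x ⟨ε, hε, rfl⟩
      exact le_sSup_of_le ⟨ε, hε, rfl⟩ (hgf ε)
  have hft := hfanti.tendsto_nhdsGT (OrderTop.bddAbove _)
  rwa [himg] at hft


end QRT
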